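/- Let E be a Δ-Σ-field of characteristic zero with derivations δ_1,…,δ_s and automorphisms σ_1,…,σ_t (all pairwise commuting). Then the following are equivalent: (1) δ_1,…,δ_s are linearly independent over the field of constants C(E) := {a ∈ E | δ_i a = 0 for all i and σ_j a = a for all j}, i.e. c_1 δ_1 + … + c_s δ_s = 0 on E with c_i ∈ C(E) implies all c_i = 0; (2) δ_1,…,δ_s are linearly independent over E, i.e. b_1 δ_1 + … + b_s δ_s = 0 on E with b_i ∈ E implies all b_i = 0; (3) there exist a_1,…,a_s ∈ E such that det J(a_1,…,a_s) ≠ 0, where J(a_1,…,a_s) is the s×s matrix with (i,j)-entry δ_j a_i. -/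

import Mathlib

open Finset Matrix

private lemma jac_aux_one_to_two {E : Type*} [Field E] {s t : ℕ}
    (δ : Fin s → (E → E)) (σ : Fin t → (E ≃+* E))
    (hadd : ∀ i, ∀ x y : E, δ i (x + y) = δ i x + δ i y)
    (hleib : ∀ i, ∀ x y : E, δ i (x * y) = δ i x * y + x * δ i y)
    (hδδ : ∀ i j, ∀ x : E, δ i (δ j x) = δ j (δ i x))
    (hδσ : ∀ i j, ∀ x : E, δ i (σ j x) = σ j (δ i x))
    (h1 : ∀ c : Fin s → E,
        (∀ i, (∀ k, δ k (c i) = 0) ∧ (∀ j, σ j (c i) = c i)) →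
        (∀ x : E, ∑ i, c i * δ i x = 0) → ∀ i, c i = 0) :
    ∀ b : Fin s → E, (∀ x : E, ∑ i, b i * δ i x = 0) → ∀ i, b i = 0 := by
  classical
  have hzero : ∀ k, δ k (0:E) = 0 := by
    intro k
    have h := hadd k 0 0
    rw [add_zero] at h
    exact (left_eq_add.mp h)
  have hone : ∀ k, δ k (1:E) = 0 := by
    intro k
    have h := hleib k 1 1
    rw [mul_one, mul_one, one_mul] at h
    exact (left_eq_add.mp h)
  have hsum : ∀ k (f : Fin s → E), δ k (∑ i, f i) = ∑ i, δ k (f i) := by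
    intro k f
    exact map_sum ({ toFun := δ k, map_zero' := hzero k, map_add' := hadd k } : E →+ E) f Finset.univ
  by_contra hcon
  push_neg at hcon
  obtain ⟨b₀, hrel₀, i₀', hb₀⟩ := hcon
  have hQ : ∃ n, ∃ b : Fin s → E, (∀ x : E, ∑ i, b i * δ i x = 0) ∧ (∃ i, b i ≠ 0) ∧
      (Finset.univ.filter fun i => b i ≠ 0).card = n :=
    ⟨_, b₀, hrel₀, ⟨i₀', hb₀⟩, rfl⟩
  obtain ⟨b, hrel, ⟨i0, hi0⟩, hcard⟩ := Nat.find_spec hQ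
  have hmin : ∀ c : Fin s → E, (∀ x : E, ∑ i, c i * δ i x = 0) →
      (∀ i, b i = 0 → c i = 0) → c i0 = 0 → ∀ i, c i = 0 := by
    intro c hcrel hsupp hci0 i
    by_contra hci
    have hsub : (Finset.univ.filter fun j => c j ≠ 0) ⊆
        (Finset.univ.filter fun j => b j ≠ 0).erase i0 := by
      intro j hj
      simp only [Finset.mem_filter, Finset.mem_univ, true_and] at hj
      refine Finset.mem_erase.mpr ⟨?_, ?_⟩
      · rintro rfl; exact hj hci0
      · simp only [Finset.mem_filter, Finset.mem_univ, true_and]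
        intro hbj; exact hj (hsupp j hbj)
    have hlt : (Finset.univ.filter fun j => c j ≠ 0).card < Nat.find hQ := by
      calc (Finset.univ.filter fun j => c j ≠ 0).card
          ≤ ((Finset.univ.filter fun j => b j ≠ 0).erase i0).card := Finset.card_le_card hsub
        _ < (Finset.univ.filter fun j => b j ≠ 0).card :=
            Finset.card_erase_lt_of_mem (by simp [hi0])
        _ = Nat.find hQ := hcard
    exact Nat.find_min hQ hlt ⟨c, hcrel, ⟨i, hci⟩, rfl⟩
  set b' : Fin s → E := fun i => b i * (b i0)⁻¹ with hb'
  have hb'i0 : b' i0 = 1 := mul_inv_cancel₀ hi0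
  have hsupp' : ∀ i, b i = 0 → b' i = 0 := by
    intro i h; simp [hb', h]
  have hb'rel : ∀ x : E, ∑ i, b' i * δ i x = 0 := by
    intro x
    have : ∑ i, b' i * δ i x = (∑ i, b i * δ i x) * (b i0)⁻¹ := by
      rw [Finset.sum_mul]
      exact Finset.sum_congr rfl fun i _ => by ring
    rw [this, hrel x, zero_mul]
  have hδb' : ∀ k i, δ k (b' i) = 0 := by
    intro k
    have hcrel : ∀ x : E, ∑ i, δ k (b' i) * δ i x = 0 := by
      intro x
      have h0 : δ k (∑ i, b' i * δ i x) = 0 := by rw [hb'rel x, hzero]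
      rw [hsum k] at h0
      have h1 : ∀ i ∈ Finset.univ, δ k (b' i * δ i x)
          = δ k (b' i) * δ i x + b' i * δ i (δ k x) := by
        intro i _
        rw [hleib, hδδ k i]
      rw [Finset.sum_congr rfl h1, Finset.sum_add_distrib, hb'rel (δ k x), add_zero] at h0
      exact h0
    exact hmin _ hcrel (fun i hbi => by rw [hsupp' i hbi, hzero]) (by rw [hb'i0, hone])
  have hσb' : ∀ j i, σ j (b' i) = b' i := by
    intro j
    have hcrel2 : ∀ x : E, ∑ i, σ j (b' i) * δ i x = 0 := by
      intro x
      have h0 : σ j (∑ i, b' i * δ i ((σ j).symm x)) = 0 := by rw [hb'rel, map_zero]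
      rw [map_sum] at h0
      have h1 : ∀ i ∈ Finset.univ, σ j (b' i * δ i ((σ j).symm x)) = σ j (b' i) * δ i x := by
        intro i _
        rw [_root_.map_mul, ← hδσ i j ((σ j).symm x), RingEquiv.apply_symm_apply]
      rwa [Finset.sum_congr rfl h1] at h0
    have hc := hmin (fun i => σ j (b' i) - b' i) ?_ ?_ ?_
    · intro i
      have := hc i
      exact sub_eq_zero.mp this
    · intro x
      have : ∑ i, (σ j (b' i) - b' i) * δ i x
          = ∑ i, σ j (b' i) * δ i x - ∑ i, b' i * δ i x := by
        rw [← Finset.sum_sub_distrib]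
        exact Finset.sum_congr rfl fun i _ => by ring
      rw [this, hcrel2 x, hb'rel x, sub_zero]
    · intro i hbi
      show σ j (b' i) - b' i = 0
      rw [hsupp' i hbi, map_zero, sub_zero]
    · show σ j (b' i0) - b' i0 = 0
      rw [hb'i0, _root_.map_one, sub_self]
  have := h1 b' (fun i => ⟨fun k => hδb' k i, fun j => hσb' j i⟩) hb'rel i0
  rw [hb'i0] at this
  exact one_ne_zero this

private lemma jac_aux_two_to_three {E : Type*} [Field E] {s : ℕ}
    (δ : Fin s → (E → E))
    (h2 : ∀ b : Fin s → E, (∀ x : E, ∑ i, b i * δ i x = 0) → ∀ i, b i = 0) :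
    ∃ a : Fin s → E, (Matrix.of fun i j : Fin s => δ j (a i)).det ≠ 0 := by
  classical
  set v : E → (Fin s → E) := fun x j => δ j x with hv
  have hspan : Submodule.span E (Set.range v) = ⊤ := by
    by_contra hne
    obtain ⟨φ, hφ0, hker⟩ := (Submodule.span E (Set.range v)).exists_le_ker_of_lt_top
      (lt_top_iff_ne_top.mpr hne)
    set b : Fin s → E := fun i => φ (Pi.single i 1) with hb
    have hφeq : ∀ y : Fin s → E, φ y = ∑ i, y i * b i := by
      intro y
      have hy : y = ∑ i, y i • (Pi.single i 1 : Fin s → E) := by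
        funext j
        simp [Finset.sum_apply, Pi.single_apply]
      conv_lhs => rw [hy]
      rw [map_sum]
      exact Finset.sum_congr rfl fun i _ => by rw [_root_.map_smul, smul_eq_mul]
    have hbrel : ∀ x : E, ∑ i, b i * δ i x = 0 := by
      intro x
      have hm := hker (Submodule.subset_span ⟨x, rfl⟩)
      rw [LinearMap.mem_ker, hφeq] at hm
      calc ∑ i, b i * δ i x = ∑ i, v x i * b i := Finset.sum_congr rfl fun i _ => mul_comm _ _
        _ = 0 := hm
    have hb0 : ∀ i, b i = 0 := h2 b hbrel
    apply hφ0
    apply LinearMap.ext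
    intro y
    rw [hφeq]
    simp [hb0]
  obtain ⟨bs, hbs_sub, hbs_span, hbs_li⟩ := exists_linearIndependent E (Set.range v)
  rw [hspan] at hbs_span
  have hbasis : Module.Basis bs E (Fin s → E) :=
    Module.Basis.mk hbs_li (by rw [Subtype.range_coe, hbs_span])
  haveI : Fintype bs := FiniteDimensional.fintypeBasisIndex hbasis
  have hcard : Fintype.card bs = s := by
    have h1 := Module.finrank_eq_card_basis hbasis
    have h2' : Module.finrank E (Fin s → E) = s := Module.finrank_fin_fun E
    omega
  have e : Fin s ≃ bs := (Fintype.equivFinOfCardEq hcard).symm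
  have hmem : ∀ i : Fin s, ∃ x : E, v x = (e i : Fin s → E) := fun i => hbs_sub (e i).2
  choose a ha using hmem
  refine ⟨a, ?_⟩
  intro hdet
  obtain ⟨c, hc0, hcM⟩ := Matrix.exists_vecMul_eq_zero_iff.mpr hdet
  have hli2 : LinearIndependent E (fun i : Fin s => ((e i : _) : Fin s → E)) :=
    hbs_li.comp e e.injective
  have hsum0 : ∑ i, c i • ((e i : _) : Fin s → E) = 0 := by
    funext j
    have hj := congrFun hcM j
    simp only [Matrix.vecMul, dotProduct, Matrix.of_apply, Pi.zero_apply] at hj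
    simp only [Finset.sum_apply, Pi.smul_apply, smul_eq_mul, Pi.zero_apply]
    calc ∑ i, c i * ((e i : _) : Fin s → E) j = ∑ i, c i * δ j (a i) := by
          refine Finset.sum_congr rfl fun i _ => ?_
          rw [← ha i]
      _ = 0 := by simpa [Matrix.transpose] using hj
  have hc := Fintype.linearIndependent_iff.mp hli2 c hsum0
  exact hc0 (funext hc)

theorem nondegenerate_iff_jacobian
    {E : Type*} [Field E] [CharZero E]
    {s t : ℕ}
    (δ : Fin s → (E → E)) (σ : Fin t → (E ≃+* E))
    (hadd : ∀ i, ∀ x y : E, δ i (x + y) = δ i x + δ i y)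
    (hleib : ∀ i, ∀ x y : E, δ i (x * y) = δ i x * y + x * δ i y)
    (hδδ : ∀ i j, ∀ x : E, δ i (δ j x) = δ j (δ i x))
    (hδσ : ∀ i j, ∀ x : E, δ i (σ j x) = σ j (δ i x))
    (hσσ : ∀ i j, ∀ x : E, σ i (σ j x) = σ j (σ i x)) :
    ((∀ c : Fin s → E,
        (∀ i, (∀ k, δ k (c i) = 0) ∧ (∀ j, σ j (c i) = c i)) →
        (∀ x : E, ∑ i, c i * δ i x = 0) → ∀ i, c i = 0) ↔
      (∀ b : Fin s → E, (∀ x : E, ∑ i, b i * δ i x = 0) → ∀ i, b i = 0))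
    ∧
    ((∀ b : Fin s → E, (∀ x : E, ∑ i, b i * δ i x = 0) → ∀ i, b i = 0) ↔
      (∃ a : Fin s → E, (Matrix.of fun i j : Fin s => δ j (a i)).det ≠ 0)) := by
  constructor
  · constructor
    · intro h1
      exact jac_aux_one_to_two δ σ hadd hleib hδδ hδσ h1
    · intro h2 c _ hrel
      exact h2 c hrel
  · constructor
    · intro h2
      exact jac_aux_two_to_three δ h2
    · rintro ⟨a, hdet⟩ b hrel i
      have hM : (Matrix.of fun i j : Fin s => δ j (a i)) *ᵥ b = 0 := by
        funext k
        simpa [Matrix.mulVec, dotProduct, mul_comm] using hrel (a k)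
      have hb0 := Matrix.eq_zero_of_mulVec_eq_zero hdet hM
      exact congrFun hb0 i
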